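/- Every ABC scoring rule satisfies group participation: for every approval profile A, every committee size k, and every group of voters I ⊊ N_A, it is not the case that f(A_{-I},k) ≿_i f(A,k) for all i ∈ I and f(A_{-I},k) ≻_i f(A,k) for some i ∈ I. -/
import Mathlib


/-- An approval profile is a multiset of approval ballots (anonymous encoding):
each ballot is a nonempty subset of the candidate set `C`, and the electorate
is nonempty. -/
def validProfile {C : Type*} [DecidableEq C] (A : Multiset (Finset C)) : Prop :=
  A ≠ 0 ∧ ∀ b ∈ A, b ≠ (∅ : Finset C)

/-- Kelly's extension, weak preference of a voter with ballot `b` for a set of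
committees `X` over a set of committees `Y`. -/
def KellyWeak {C : Type*} [DecidableEq C] (b : Finset C) (X Y : Set (Finset C)) : Prop :=
  ∀ W ∈ X, ∀ W' ∈ Y, (W' ∩ b).card ≤ (W ∩ b).card

/-- Kelly's extension, strict preference. -/
def KellyStrict {C : Type*} [DecidableEq C] (b : Finset C) (X Y : Set (Finset C)) : Prop :=
  KellyWeak b X Y ∧ ∃ W ∈ X, ∃ W' ∈ Y, (W' ∩ b).card < (W ∩ b).card

/-- The total score `ŝ(A,W)` of a committee `W` under the scoring function `s`. -/
def abcScore {C : Type*} [DecidableEq C] (s : ℕ → ℕ → ℚ) (A : Multiset (Finset C))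
    (W : Finset C) : ℚ :=
  (A.map fun b => s (b ∩ W).card b.card).sum

/-- The ABC scoring rule induced by `s`: all size-`k` committees with maximal score. -/
def abcRule {C : Type*} [DecidableEq C] (s : ℕ → ℕ → ℚ)
    (A : Multiset (Finset C)) (k : ℕ) : Set (Finset C) :=
  {W | W.card = k ∧ ∀ W' : Finset C, W'.card = k → abcScore s A W' ≤ abcScore s A W}

/-- Every ABC scoring rule satisfies group participation: no group of voters
`I ⊊ N_A` can benefit from abstaining. -/
theorem abcScoring_group_participation
    {C : Type*} [DecidableEq C] [Fintype C] (hm : 1 < Fintype.card C)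
    (s : ℕ → ℕ → ℚ)
    (hzero : ∀ y : ℕ, s 0 y = 0)
    (hmono : ∀ x x' y : ℕ, x ≤ x' → x' ≤ y → s x y ≤ s x' y)
    (A : Multiset (Finset C)) (hA : validProfile A)
    (k : ℕ) (hk1 : 1 ≤ k) (hk2 : k < Fintype.card C)
    (I : Multiset (Finset C)) (hIle : I ≤ A) (hIne : I ≠ A) :
    ¬ ((∀ b ∈ I, KellyWeak b (abcRule s (A - I) k) (abcRule s A k)) ∧
       ∃ b ∈ I, KellyStrict b (abcRule s (A - I) k) (abcRule s A k)) := by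
  rintro ⟨hweak, b₀, hb₀, hsw, W₀, hW₀X, W₀', hW₀'Y, hlt⟩
  -- score decomposition: ŝ(A,W) = ŝ(A-I,W) + ŝ(I,W)
  have hAdd : ∀ W : Finset C, abcScore s A W = abcScore s (A - I) W + abcScore s I W := by
    intro W
    unfold abcScore
    conv_lhs => rw [← tsub_add_cancel_of_le hIle]
    rw [Multiset.map_add, Multiset.sum_add]
  -- monotone score comparison on the group I
  have hIscore : ∀ V V' : Finset C, (∀ b ∈ I, (V' ∩ b).card ≤ (V ∩ b).card) →
      abcScore s I V' ≤ abcScore s I V := by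
    intro V V' h
    refine Multiset.sum_map_le_sum_map _ _ ?_
    intro b hb
    have h1 : (b ∩ V').card ≤ (b ∩ V).card := by
      rw [Finset.inter_comm b V', Finset.inter_comm b V]; exact h b hb
    exact hmono _ _ _ h1 (Finset.card_le_card (Finset.inter_subset_left))
  have hI₁ : abcScore s I W₀' ≤ abcScore s I W₀ :=
    hIscore W₀ W₀' (fun b hb => hweak b hb W₀ hW₀X W₀' hW₀'Y)
  -- W₀' is also optimal in A - I
  have hAmax : abcScore s A W₀ ≤ abcScore s A W₀' := hW₀'Y.2 W₀ hW₀X.1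
  have h1 : abcScore s (A - I) W₀ ≤ abcScore s (A - I) W₀' := by
    have e₀ := hAdd W₀; have e₁ := hAdd W₀'; linarith
  have hW₀'X : W₀' ∈ abcRule s (A - I) k :=
    ⟨hW₀'Y.1, fun W' hW' => le_trans (hW₀X.2 W' hW') h1⟩
  -- W₀ is also optimal in A
  have hW₀Y : W₀ ∈ abcRule s A k := by
    refine ⟨hW₀X.1, fun W' hW' => le_trans (hW₀'Y.2 W' hW') ?_⟩
    have e₀ := hAdd W₀; have e₁ := hAdd W₀'
    have h2 : abcScore s (A - I) W₀' ≤ abcScore s (A - I) W₀ := hW₀X.2 W₀' hW₀'Y.1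
    linarith
  have := hweak b₀ hb₀ W₀' hW₀'X W₀ hW₀Y
  omega
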